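/- arXiv:2509.03697 — 4 statements merged into one kernel-verified Lean document; each statement's English description precedes it below -/
import Mathlib

section
/- With (x_k), (p_n), (q_n) as above, the sequence q_n / p_n is (weakly) increasing in n. -/
/-- The sequence qₙ/pₙ is weakly increasing. -/
theorem q_div_p_monotone (x : ℕ → ℕ) (hx : StrictMono x) (hx1 : 0 < x 1)
    (p q : ℕ → ℝ)
    (hp1 : p 1 = x 1)
    (hp : ∀ n, 2 ≤ n → p n = x n + ∑ i ∈ Finset.Ico 1 n, ((x n : ℝ) - x i) * p i)
    (hq1 : q 1 = (x 1 : ℝ) ^ 2)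
    (hq : ∀ n, 2 ≤ n → q n = (x n : ℝ) ^ 2 + ∑ i ∈ Finset.Ico 1 n, ((x n : ℝ) - x i) * (q i + 1)) :
    ∀ n, 1 ≤ n → q n / p n ≤ q (n + 1) / p (n + 1) := by
  set S : ℕ → ℝ := fun n => ∑ i ∈ Finset.Ico 1 (n+1), (q i + 1) with hS
  set T : ℕ → ℝ := fun n => ∑ i ∈ Finset.Ico 1 (n+1), p i with hT
  have hd : ∀ n : ℕ, (1:ℝ) ≤ (x (n+1) : ℝ) - x n := by
    intro n
    have h := hx (Nat.lt_succ_self n)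
    have h2 : x n + 1 ≤ x (n+1) := h
    have h3 : (x n : ℝ) + 1 ≤ (x (n+1) : ℝ) := by exact_mod_cast h2
    linarith
  -- step recurrence for p
  have hpstep : ∀ n, 1 ≤ n →
      p (n+1) = p n + ((x (n+1) : ℝ) - x n) * (1 + T n) := by
    intro n hn
    by_cases h1 : n = 1
    · subst h1
      rw [hp 2 le_rfl]
      simp only [hT]
      rw [Finset.sum_Ico_succ_top (le_refl 1), Finset.sum_Ico_succ_top (le_refl 1),
        Finset.Ico_self, Finset.sum_empty, Finset.sum_empty, hp1]
      ring
    · have h2 : 2 ≤ n := by omega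
      rw [hp (n+1) (by omega), Finset.sum_Ico_succ_top (by omega : 1 ≤ n)]
      have key : ∑ i ∈ Finset.Ico 1 n, ((x (n+1) : ℝ) - x i) * p i
          = (∑ i ∈ Finset.Ico 1 n, ((x n : ℝ) - x i) * p i)
            + ((x (n+1) : ℝ) - x n) * ∑ i ∈ Finset.Ico 1 n, p i := by
        rw [Finset.mul_sum, ← Finset.sum_add_distrib]
        exact Finset.sum_congr rfl (fun i _ => by ring)
      rw [key]
      simp only [hT]
      rw [Finset.sum_Ico_succ_top (by omega : 1 ≤ n), hp n h2]
      ring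
  -- step recurrence for q
  have hqstep : ∀ n, 1 ≤ n →
      q (n+1) = q n + ((x (n+1) : ℝ) - x n) * ((x (n+1) : ℝ) + x n + S n) := by
    intro n hn
    by_cases h1 : n = 1
    · subst h1
      rw [hq 2 le_rfl]
      simp only [hS]
      rw [Finset.sum_Ico_succ_top (le_refl 1), Finset.sum_Ico_succ_top (le_refl 1),
        Finset.Ico_self, Finset.sum_empty, Finset.sum_empty, hq1]
      ring
    · have h2 : 2 ≤ n := by omega
      rw [hq (n+1) (by omega), Finset.sum_Ico_succ_top (by omega : 1 ≤ n)]
      have key : ∑ i ∈ Finset.Ico 1 n, ((x (n+1) : ℝ) - x i) * (q i + 1)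
          = (∑ i ∈ Finset.Ico 1 n, ((x n : ℝ) - x i) * (q i + 1))
            + ((x (n+1) : ℝ) - x n) * ∑ i ∈ Finset.Ico 1 n, (q i + 1) := by
        rw [Finset.mul_sum, ← Finset.sum_add_distrib]
        exact Finset.sum_congr rfl (fun i _ => by ring)
      rw [key]
      simp only [hS]
      rw [Finset.sum_Ico_succ_top (by omega : 1 ≤ n), hq n h2]
      ring
  -- positivity of p
  have hppos : ∀ n, 1 ≤ n → 0 < p n := by
    intro n
    induction n using Nat.strong_induction_on with
    | _ n ih =>
      intro hn
      by_cases h1 : n = 1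
      · subst h1; rw [hp1]; exact_mod_cast hx1
      · obtain ⟨m, rfl⟩ : ∃ m, n = m + 1 := ⟨n - 1, by omega⟩
        have hm : 1 ≤ m := by omega
        rw [hpstep m hm]
        have hTm : 0 ≤ T m := by
          simp only [hT]
          apply Finset.sum_nonneg
          intro i hi
          simp only [Finset.mem_Ico] at hi
          exact (ih i (by omega) hi.1).le
        have hpm := ih m (by omega) hm
        nlinarith [hd m]
  have hTnonneg : ∀ n, 0 ≤ T n := by
    intro n
    simp only [hT]
    apply Finset.sum_nonneg
    intro i hi
    simp only [Finset.mem_Ico] at hi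
    exact (hppos i hi.1).le
  -- step recurrences for S, T
  have hSstep : ∀ n, S (n+1) = S n + (q (n+1) + 1) := by
    intro n
    simp only [hS]
    rw [Finset.sum_Ico_succ_top (by omega : 1 ≤ n+1)]
  have hTstep : ∀ n, T (n+1) = T n + p (n+1) := by
    intro n
    simp only [hT]
    rw [Finset.sum_Ico_succ_top (by omega : 1 ≤ n+1)]
  -- the key invariant
  set H : ℕ → ℝ := fun n => (2*(x n : ℝ) + 1 + S n) * p n - q n * (1 + T n) with hH
  have hHrec : ∀ n, 1 ≤ n → H (n+1) = H n
      + (2*((x (n+1) : ℝ) - x n) + 1) * p n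
      + ((x (n+1) : ℝ) - x n) * (((x (n+1) : ℝ) - x n) + 2) * (1 + T n) := by
    intro n hn
    simp only [hH]
    rw [hSstep n, hTstep n, hpstep n hn, hqstep n hn]
    ring
  have hHnonneg : ∀ n, 1 ≤ n → 0 ≤ H n := by
    intro n
    induction n with
    | zero => intro h; omega
    | succ m ih =>
      intro _
      by_cases h1 : m = 0
      · subst h1
        simp only [hH, hS, hT]
        rw [Finset.sum_Ico_succ_top (le_refl 1), Finset.sum_Ico_succ_top (le_refl 1),
          Finset.Ico_self, Finset.sum_empty, Finset.sum_empty, hp1, hq1]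
        have hx1r : (1:ℝ) ≤ x 1 := by exact_mod_cast hx1
        nlinarith
      · have hm : 1 ≤ m := by omega
        have hHm := ih hm
        rw [hHrec m hm]
        have hdm := hd m
        have hpm := hppos m hm
        have hTm := hTnonneg m
        have e1 : 0 ≤ (2 * ((x (m+1) : ℝ) - x m) + 1) * p m :=
          mul_nonneg (by linarith) hpm.le
        have e2 : 0 ≤ ((x (m+1) : ℝ) - x m) * (((x (m+1) : ℝ) - x m) + 2) * (1 + T m) :=
          mul_nonneg (mul_nonneg (by linarith) (by linarith)) (by linarith)
        linarith
  -- conclusion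
  intro n hn
  have hpn := hppos n hn
  have hpn1 := hppos (n+1) (by omega)
  rw [div_le_div_iff₀ hpn hpn1]
  have hHn := hHnonneg n hn
  simp only [hH] at hHn
  have h0d : (0:ℝ) ≤ (x (n+1) : ℝ) - x n := by linarith [hd n]
  have h1 : 0 ≤ ((x (n+1) : ℝ) - x n) *
      ((2*(x n : ℝ) + 1 + S n) * p n - q n * (1 + T n)) := mul_nonneg h0d hHn
  have h2 : 0 ≤ ((x (n+1) : ℝ) - x n) * ((((x (n+1) : ℝ) - x n) - 1) * p n) :=
    mul_nonneg h0d (mul_nonneg (by linarith [hd n]) hpn.le)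
  rw [hpstep n hn, hqstep n hn]
  nlinarith [h1, h2]
end

section
/- Let a > \sqrt{2} be real and suppose a strictly increasing sequence of positive integers (x_k) satisfies x_k \le \prod_{r=1}^{k-1}(1 + x_r) for all k \ge k_0, and x_k \le a^{2^k} for all k < k_0. Then x_k \le a^{2^k} for all k \ge 1. -/
lemma prod_aux_de (a : ℝ) (n : ℕ) :
    (a ^ 2 - 1) * ∏ r ∈ Finset.Icc 1 n, (1 + a ^ (2 ^ r)) = a ^ (2 ^ (n + 1)) - 1 := by
  induction n with
  | zero => simp [pow_succ]
  | succ n ih =>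
    rw [Finset.prod_Icc_succ_top (by omega), ← mul_assoc, ih]
    have h : a ^ (2 ^ (n + 2)) = a ^ (2 ^ (n + 1)) * a ^ (2 ^ (n + 1)) := by
      rw [← pow_add]; congr 1; ring
    rw [h]; ring

/-- If a > √2, x_k ≤ ∏_{r=1}^{k-1}(1+x_r) for k ≥ k₀, and x_k ≤ a^{2^k} for k < k₀,
then x_k ≤ a^{2^k} for all k ≥ 1. -/
theorem double_exponential_bound (x : ℕ → ℕ) (hx : StrictMono x) (hx1 : 0 < x 1)
    (a : ℝ) (ha : Real.sqrt 2 < a) (k₀ : ℕ) (hk₀ : 1 ≤ k₀)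
    (h1 : ∀ k, k₀ ≤ k → (x k : ℝ) ≤ ∏ r ∈ Finset.Icc 1 (k - 1), (1 + (x r : ℝ)))
    (h2 : ∀ k, 1 ≤ k → k < k₀ → (x k : ℝ) ≤ a ^ (2 ^ k)) :
    ∀ k, 1 ≤ k → (x k : ℝ) ≤ a ^ (2 ^ k) := by
  have ha0 : 0 < a := lt_trans (Real.sqrt_pos.mpr (by norm_num)) ha
  have h2a : 2 < a ^ 2 := by
    have := pow_lt_pow_left₀ ha (Real.sqrt_nonneg 2) two_ne_zero
    rwa [Real.sq_sqrt (by norm_num : (2:ℝ) ≥ 0)] at this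
  intro k
  induction k using Nat.strong_induction_on with
  | _ k ih =>
    intro hk
    by_cases hcase : k < k₀
    · exact h2 k hk hcase
    · push_neg at hcase
      have hPnn : (0:ℝ) ≤ ∏ r ∈ Finset.Icc 1 (k - 1), (1 + a ^ (2 ^ r)) :=
        Finset.prod_nonneg (fun r _ => by positivity)
      calc (x k : ℝ) ≤ ∏ r ∈ Finset.Icc 1 (k - 1), (1 + (x r : ℝ)) := h1 k hcase
        _ ≤ ∏ r ∈ Finset.Icc 1 (k - 1), (1 + a ^ (2 ^ r)) := by
            apply Finset.prod_le_prod
            · intro r _; positivity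
            · intro r hr
              simp only [Finset.mem_Icc] at hr
              have := ih r (by omega) hr.1
              linarith
        _ ≤ a ^ (2 ^ k) := by
            have h := prod_aux_de a (k - 1)
            have hk1 : k - 1 + 1 = k := by omega
            rw [hk1] at h
            nlinarith [hPnn]
end

section
/- If a strictly increasing sequence of positive integers (x_k) satisfies: for every a > 1 there exists k \ge 1 with x_k > a^{2^k}, then the series \sum_{n \ge 1} x_n \prod_{r=1}^{n-1} 1/(1+x_r) diverges. -/
/-- If for every a > 1 some x_k exceeds a^{2^k}, then ∑ x_n ∏_{r=1}^{n-1} 1/(1+x_r)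
diverges. -/
theorem critical_not_summable (x : ℕ → ℕ) (hx : StrictMono x) (hx1 : 0 < x 1)
    (h : ∀ a : ℝ, 1 < a → ∃ k, 1 ≤ k ∧ a ^ (2 ^ k) < (x k : ℝ)) :
    ¬ Summable (fun n => (x n : ℝ) * ∏ r ∈ Finset.Icc 1 (n - 1), (1 / (1 + (x r : ℝ)))) := by
  intro hs
  set f : ℕ → ℝ := fun n => (x n : ℝ) * ∏ r ∈ Finset.Icc 1 (n - 1), (1 / (1 + (x r : ℝ)))
    with hf
  have hfnn : ∀ n, 0 ≤ f n := fun n => mul_nonneg (Nat.cast_nonneg _)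
    (Finset.prod_nonneg fun r _ => by positivity)
  set Q : ℕ → ℝ := fun m => ∏ r ∈ Finset.Icc 1 m, (1 + (x r : ℝ)) with hQ
  have hQ1 : ∀ m, 1 ≤ Q m := by
    intro m
    simp only [hQ]
    calc (1 : ℝ) = ∏ _r ∈ Finset.Icc 1 m, (1 : ℝ) := by simp
      _ ≤ ∏ r ∈ Finset.Icc 1 m, (1 + (x r : ℝ)) :=
        Finset.prod_le_prod (fun i _ => by norm_num)
          (fun i _ => le_add_of_nonneg_right (Nat.cast_nonneg _))
  have hQpos : ∀ m, 0 < Q m := fun m => lt_of_lt_of_le one_pos (hQ1 m)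
  set C : ℝ := max (∑' n, f n) 1 with hCdef
  have hC1 : 1 ≤ C := le_max_right _ _
  have hfC : ∀ n, f n ≤ C := fun n =>
    (Summable.le_tsum hs n fun i _ => hfnn i).trans (le_max_left _ _)
  have key : ∀ m, (x (m + 1) : ℝ) ≤ C * Q m := by
    intro m
    have hfe : f (m + 1) = (x (m + 1) : ℝ) / Q m := by
      simp only [hf, hQ, Nat.add_sub_cancel, one_div, Finset.prod_inv_distrib,
        div_eq_mul_inv, one_mul]
    have := hfC (m + 1)
    rw [hfe, div_le_iff₀ (hQpos m)] at this
    exact this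
  have Qsucc : ∀ m, Q (m + 1) = Q m * (1 + (x (m + 1) : ℝ)) := fun m =>
    Finset.prod_Icc_succ_top (Nat.succ_le_succ (Nat.zero_le m)) _
  set a : ℝ := 2 * C * Q 1 with hadef
  have hCQ : ∀ m, 1 ≤ C * Q m := fun m => one_le_mul_of_one_le_of_one_le hC1 (hQ1 m)
  have ha1 : 1 < a := by
    have := hCQ 1
    nlinarith
  have main : ∀ m, 2 * C * Q (m + 1) ≤ a ^ (2 ^ m) := by
    intro m
    induction m with
    | zero => simpa [hadef] using le_refl a
    | succ m ih =>
      have hx2 : 1 + (x (m + 2) : ℝ) ≤ 2 * (C * Q (m + 1)) := by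
        have h1 := key (m + 1)
        have h2 := hCQ (m + 1)
        nlinarith
      have hpos : (0 : ℝ) ≤ 2 * C * Q (m + 1) := by nlinarith [hCQ (m + 1)]
      calc 2 * C * Q (m + 2) = (2 * C * Q (m + 1)) * (1 + (x (m + 2) : ℝ)) := by
            rw [Qsucc (m + 1)]; ring
        _ ≤ (2 * C * Q (m + 1)) * (2 * (C * Q (m + 1))) :=
            mul_le_mul_of_nonneg_left hx2 hpos
        _ = (2 * C * Q (m + 1)) ^ 2 := by ring
        _ ≤ (a ^ (2 ^ m)) ^ 2 := pow_le_pow_left₀ hpos ih 2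
        _ = a ^ (2 ^ (m + 1)) := by rw [← pow_mul, pow_succ]
  have haa : 1 ≤ a := le_of_lt ha1
  have final : ∀ k, 1 ≤ k → (x k : ℝ) ≤ a ^ (2 ^ k) := by
    intro k hk
    obtain ⟨m, rfl⟩ := Nat.exists_eq_add_of_le hk
    cases m with
    | zero =>
      have hQ0 : Q 0 = 1 := by simp [hQ]
      have h1 : (x 1 : ℝ) ≤ C := by
        have := key 0
        rwa [hQ0, mul_one] at this
      have hCa : C ≤ a := by nlinarith [hQ1 1]
      have : a ≤ a ^ (2 ^ 1) :=
        (pow_one a).symm.trans_le (pow_le_pow_right₀ haa (by norm_num))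
      calc (x 1 : ℝ) ≤ C := h1
        _ ≤ a := hCa
        _ ≤ a ^ (2 ^ 1) := this
    | succ m =>
      have h1 : (x (m + 2) : ℝ) ≤ C * Q (m + 1) := key (m + 1)
      have h2 : C * Q (m + 1) ≤ 2 * C * Q (m + 1) := by nlinarith [hCQ (m + 1)]
      have h3 : (2 : ℝ) * C * Q (m + 1) ≤ a ^ (2 ^ m) := main m
      have h4 : a ^ (2 ^ m) ≤ a ^ (2 ^ (m + 2)) :=
        pow_le_pow_right₀ haa (Nat.pow_le_pow_right (by norm_num) (by omega))
      have : (1 : ℕ) + (m + 1) = m + 2 := by omega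
      rw [this]
      linarith
  obtain ⟨k, hk1, hk2⟩ := h a ha1
  exact absurd hk2 (not_lt.mpr (final k hk1))
end

section
/- Let 0 < \lambda < 1 and let \phi_{\kappa,\lambda} be the unique positive root of X^{\kappa+1} - X^\kappa - \lambda(X^\kappa + ... + X + 1). Then \phi_{\kappa,\lambda} \ge 1 + \lambda, and as \kappa \to \infty, \phi_{\kappa,\lambda} converges to \phi_\lambda := (2 + \lambda + \sqrt{\lambda^2 + 4\lambda})/2. -/
/-- For 0 < λ < 1, the unique positive root φ_{κ,λ} of
X^{κ+1} - X^κ - λ(X^κ + ... + 1) satisfies φ_{κ,λ} ≥ 1 + λ and converges, as κ → ∞,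
to φ_λ = (2 + λ + √(λ² + 4λ))/2. -/
theorem phi_kappa_lambda_limit (l : ℝ) (hl0 : 0 < l) (hl1 : l < 1)
    (φ : ℕ → ℝ) (hφpos : ∀ κ, 1 ≤ κ → 0 < φ κ)
    (hφroot : ∀ κ, 1 ≤ κ →
      (φ κ) ^ (κ + 1) - (φ κ) ^ κ - l * ∑ i ∈ Finset.range (κ + 1), (φ κ) ^ i = 0) :
    (∀ κ, 1 ≤ κ → 1 + l ≤ φ κ) ∧
    Filter.Tendsto φ Filter.atTop (nhds ((2 + l + Real.sqrt (l ^ 2 + 4 * l)) / 2)) := by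
  have hs4 : (0:ℝ) < l ^ 2 + 4 * l := by nlinarith
  set d := Real.sqrt (l ^ 2 + 4 * l) with hd
  have hdsq : d ^ 2 = l ^ 2 + 4 * l := Real.sq_sqrt hs4.le
  have hd0 : 0 < d := Real.sqrt_pos.mpr hs4
  set r := (2 + l + d) / 2 with hrdef
  set s := (2 + l - d) / 2 with hsdef
  have hrs : r * s = 1 := by
    simp only [hrdef, hsdef]; nlinarith [hdsq]
  have hsum : r + s = 2 + l := by simp only [hrdef, hsdef]; ring
  have hdl : l ≤ d := by nlinarith [hdsq, hd0]
  have hs1 : s ≤ 1 := by simp only [hsdef]; linarith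
  -- part 1
  have part1 : ∀ κ, 1 ≤ κ → 1 + l ≤ φ κ := by
    intro κ hκ
    have hp := hφpos κ hκ
    have hr := hφroot κ hκ
    have hsumge : (φ κ) ^ κ ≤ ∑ i ∈ Finset.range (κ + 1), (φ κ) ^ i :=
      Finset.single_le_sum (fun i _ => (pow_pos hp i).le) (Finset.self_mem_range_succ κ)
    have hp1 : (φ κ) ^ (κ + 1) = (φ κ) ^ κ * φ κ := pow_succ _ _
    nlinarith [pow_pos hp κ, mul_le_mul_of_nonneg_left hsumge hl0.le]
  -- key identity
  have hquad : ∀ x : ℝ, (x - r) * (x - s) = x ^ 2 - (2 + l) * x + 1 := by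
    intro x; linear_combination (-x) * hsum + hrs
  have key : ∀ κ, 1 ≤ κ → (φ κ - r) * (φ κ - s) * (φ κ) ^ κ = -l := by
    intro κ hκ
    have hr := hφroot κ hκ
    have hg : (∑ i ∈ Finset.range (κ + 1), (φ κ) ^ i) * (φ κ - 1) = (φ κ) ^ (κ + 1) - 1 :=
      geom_sum_mul _ _
    have hp1 : (φ κ) ^ (κ + 1) = (φ κ) ^ κ * φ κ := pow_succ _ _
    rw [hquad]
    linear_combination (φ κ - 1) * hr + l * hg + (1 + l - φ κ) * hp1
  have hphis : ∀ κ, 1 ≤ κ → l ≤ φ κ - s := fun κ hκ => by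
    have := part1 κ hκ; linarith
  have hub : ∀ κ, 1 ≤ κ → φ κ ≤ r := by
    intro κ hκ
    by_contra h
    push_neg at h
    have hk := key κ hκ
    have hpow : 0 < (φ κ) ^ κ := pow_pos (hφpos κ hκ) κ
    have haux : 0 < (φ κ - r) * (φ κ - s) * (φ κ) ^ κ :=
      mul_pos (mul_pos (sub_pos.mpr h) (lt_of_lt_of_le hl0 (hphis κ hκ))) hpow
    linarith
  have hlb : ∀ κ, 1 ≤ κ → r - ((1 + l)⁻¹) ^ κ ≤ φ κ := by
    intro κ hκ
    have hk : (r - φ κ) * (φ κ - s) * (φ κ) ^ κ = l := by linear_combination -key κ hκ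
    have hB : (0:ℝ) < (1 + l) ^ κ := pow_pos (by linarith) κ
    have h1 : (1 + l) ^ κ ≤ (φ κ) ^ κ := pow_le_pow_left₀ (by linarith) (part1 κ hκ) κ
    have h2 : l ≤ φ κ - s := hphis κ hκ
    have hgoal : (r - φ κ) * (1 + l) ^ κ ≤ 1 := by
      rcases le_or_gt r (φ κ) with h | h
      · nlinarith
      · have hstep : (1 + l) ^ κ * l ≤ (φ κ) ^ κ * (φ κ - s) :=
          mul_le_mul h1 h2 hl0.le (pow_pos (hφpos κ hκ) κ).le
        have hstep2 := mul_le_mul_of_nonneg_left hstep (sub_pos.mpr h).le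
        nlinarith [hk, hstep2]
    have : r - φ κ ≤ ((1 + l) ^ κ)⁻¹ := by
      rw [← one_div, le_div_iff₀ hB]; exact hgoal
    rw [inv_pow]
    linarith
  refine ⟨part1, ?_⟩
  have hlim0 : Filter.Tendsto (fun κ : ℕ => ((1 + l)⁻¹) ^ κ) Filter.atTop (nhds 0) := by
    apply tendsto_pow_atTop_nhds_zero_of_lt_one
    · positivity
    · rw [inv_lt_one_iff₀]; right; linarith
  have hlo : Filter.Tendsto (fun κ : ℕ => r - ((1 + l)⁻¹) ^ κ) Filter.atTop (nhds r) := by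
    simpa using Filter.Tendsto.sub (tendsto_const_nhds (x := r)) hlim0
  refine tendsto_of_tendsto_of_tendsto_of_le_of_le' hlo tendsto_const_nhds ?_ ?_
  · exact Filter.eventually_atTop.mpr ⟨1, fun κ hκ => hlb κ hκ⟩
  · exact Filter.eventually_atTop.mpr ⟨1, fun κ hκ => hub κ hκ⟩
end
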